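/- Let T: X ⇉ X* be set-valued, ρ ≥ 0, and ∇φ* continuous. Then T is coercive (meaning ‖xⁿ‖ → ∞ implies inf‖T(xⁿ)‖ → ∞) if and only if the Bregman–Yosida regularization T_ρ = (ρ∇φ* + T⁻¹)⁻¹ is coercive. -/

import Mathlib

open Filter Topology
open scoped ENNReal

/-- A set-valued map `S : X ⇉ X` is coercive if `‖xⁿ‖ → ∞` implies
`inf{‖v‖ : v ∈ S(xⁿ)} → ∞` (with `inf ∅ = ∞`). -/
def IsCoerciveOp {X : Type*} [NormedAddCommGroup X] (S : X → Set X) : Prop :=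
  ∀ x : ℕ → X, Tendsto (fun n => ‖x n‖) atTop atTop →
    Tendsto (fun n => ⨅ v ∈ S (x n), (‖v‖₊ : ℝ≥0∞)) atTop (nhds ⊤)

private lemma coercive_iff_unif {X : Type*} [NormedAddCommGroup X] (S : X → Set X) :
    IsCoerciveOp S ↔ ∀ M : ℝ, ∃ R : ℝ, ∀ x : X, R ≤ ‖x‖ → ∀ v ∈ S x, M ≤ ‖v‖ := by
  constructor
  · intro h M
    by_contra hc
    push_neg at hc
    choose x hx v hvS hvM using fun n : ℕ => hc (n : ℝ)
    have hx' : Tendsto (fun n : ℕ => ‖x n‖) atTop atTop :=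
      tendsto_atTop_mono hx tendsto_natCast_atTop_atTop
    have h2 := h x hx'
    rw [ENNReal.tendsto_nhds_top_iff_nnreal] at h2
    obtain ⟨n, hn⟩ := (h2 M.toNNReal).exists
    have hle : (⨅ w ∈ S (x n), (‖w‖₊ : ℝ≥0∞)) ≤ (‖v n‖₊ : ℝ≥0∞) :=
      iInf₂_le (v n) (hvS n)
    have hle2 : (‖v n‖₊ : ℝ≥0∞) ≤ (M.toNNReal : ℝ≥0∞) := by
      rw [ENNReal.coe_le_coe, ← norm_toNNReal]
      exact Real.toNNReal_mono (hvM n).le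
    exact absurd (hn.trans_le (hle.trans hle2)) (lt_irrefl _)
  · intro h x hx
    rw [ENNReal.tendsto_nhds_top_iff_nnreal]
    intro M
    obtain ⟨R, hR⟩ := h ((M : ℝ) + 1)
    filter_upwards [hx.eventually (eventually_ge_atTop R)] with n hn
    have hbound : ∀ v ∈ S (x n), ((M + 1 : NNReal) : ℝ≥0∞) ≤ (‖v‖₊ : ℝ≥0∞) := by
      intro v hv
      rw [ENNReal.coe_le_coe, ← NNReal.coe_le_coe]
      have := hR (x n) hn v hv
      simpa [coe_nnnorm] using this
    calc (M : ℝ≥0∞) < ((M + 1 : NNReal) : ℝ≥0∞) := by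
          exact_mod_cast (lt_add_one M)
      _ ≤ ⨅ v ∈ S (x n), (‖v‖₊ : ℝ≥0∞) := le_iInf₂ hbound

private lemma grad_ineq {X : Type*} [NormedAddCommGroup X] [InnerProductSpace ℝ X]
    [CompleteSpace X] {φ : X → ℝ} {gφ : X → X}
    (hconv : ConvexOn ℝ Set.univ φ) (hgrad : ∀ x, HasGradientAt φ (gφ x) x)
    (x y : X) : φ x + (inner ℝ (gφ x) (y - x) : ℝ) ≤ φ y := by
  set L := AffineMap.lineMap (k := ℝ) x y with hL
  have hcomp : ConvexOn ℝ Set.univ (φ ∘ L) := by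
    have := hconv.comp_affineMap L
    simpa using this
  have hderiv : HasDerivAt (φ ∘ L) (inner ℝ (gφ x) (y - x) : ℝ) 0 := by
    have h1 : HasFDerivAt φ (InnerProductSpace.toDual ℝ X (gφ x)) (L 0) := by
      rw [hL, AffineMap.lineMap_apply_zero]
      exact (hgrad x).hasFDerivAt
    have h2 : HasDerivAt L (y - x) 0 := AffineMap.hasDerivAt_lineMap
    have := h1.comp_hasDerivAt 0 h2
    simpa [InnerProductSpace.toDual_apply_apply] using this
  have hslope := hcomp.le_slope_of_hasDerivAt (Set.mem_univ (0:ℝ)) (Set.mem_univ (1:ℝ))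
    zero_lt_one hderiv
  rw [slope_def_field] at hslope
  have h0 : (φ ∘ L) 0 = φ x := by simp [hL]
  have h1 : (φ ∘ L) 1 = φ y := by simp [hL]
  rw [h0, h1] at hslope
  simp only [div_one, sub_zero] at hslope
  linarith [hslope]

private lemma grad_coercive {X : Type*} [NormedAddCommGroup X] [InnerProductSpace ℝ X]
    [CompleteSpace X] {φ : X → ℝ} {gφ : X → X}
    (hconv : ConvexOn ℝ Set.univ φ) (hgrad : ∀ x, HasGradientAt φ (gφ x) x)
    (hsc : Filter.Tendsto (fun x => φ x / ‖x‖) (Filter.cocompact X) Filter.atTop)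
    (M : ℝ) : ∃ R : ℝ, ∀ x : X, R ≤ ‖x‖ → M ≤ ‖gφ x‖ := by
  have hev : ∀ᶠ x in cocompact X, M + |φ 0| ≤ φ x / ‖x‖ :=
    hsc.eventually (eventually_ge_atTop (M + |φ 0|))
  rw [(Filter.hasBasis_cocompact).eventually_iff] at hev
  obtain ⟨K, hK, hKa⟩ := hev
  obtain ⟨r, hr⟩ := hK.isBounded.subset_closedBall 0
  refine ⟨max (r + 1) 1, fun x hx => ?_⟩
  have hx1 : (1 : ℝ) ≤ ‖x‖ := le_trans (le_max_right _ _) hx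
  have hxpos : (0 : ℝ) < ‖x‖ := lt_of_lt_of_le one_pos hx1
  have hxK : x ∉ K := by
    intro hxK
    have := hr hxK
    rw [Metric.mem_closedBall, dist_zero_right] at this
    have : r + 1 ≤ r := le_trans (le_trans (le_max_left _ _) hx) this
    linarith
  have hφ : (M + |φ 0|) * ‖x‖ ≤ φ x := by
    have := hKa hxK
    rwa [le_div_iff₀ hxpos] at this
  have hgi : φ x + (inner ℝ (gφ x) ((0:X) - x) : ℝ) ≤ φ 0 := grad_ineq hconv hgrad x 0
  rw [zero_sub, inner_neg_right] at hgi
  have hin : (inner ℝ (gφ x) x : ℝ) ≤ ‖gφ x‖ * ‖x‖ := real_inner_le_norm _ _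
  have habs : φ 0 ≤ |φ 0| := le_abs_self _
  have h5 : M * ‖x‖ ≤ ‖gφ x‖ * ‖x‖ := by nlinarith [abs_nonneg (φ 0)]
  exact le_of_mul_le_mul_right h5 hxpos

/-- `T` is coercive iff its Bregman–Yosida regularization `T_ρ = (ρ∇φ* + T⁻¹)⁻¹`
is coercive. -/
theorem stmt5 {X : Type*} [NormedAddCommGroup X] [InnerProductSpace ℝ X] [CompleteSpace X]
    (φ : X → ℝ) (gφ gφs : X → X)
    (hconv : StrictConvexOn ℝ Set.univ φ)
    (hgrad : ∀ x, HasGradientAt φ (gφ x) x)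
    (hsc : Filter.Tendsto (fun x => φ x / ‖x‖) (Filter.cocompact X) Filter.atTop)
    (hinv1 : Function.LeftInverse gφs gφ)
    (hinv2 : Function.RightInverse gφs gφ)
    (hcont : Continuous gφs)
    (T : X → Set X) (ρ : ℝ) (hρ : 0 ≤ ρ) :
    IsCoerciveOp T ↔ IsCoerciveOp (fun x => {v : X | v ∈ T (x - ρ • gφs v)}) := by
  -- `gφs` maps bounded sets to bounded sets
  have hbdd : ∀ M : ℝ, ∃ R : ℝ, 0 ≤ R ∧ ∀ v : X, ‖v‖ ≤ M → ‖gφs v‖ ≤ R := by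
    intro M
    obtain ⟨R, hR⟩ := grad_coercive hconv.convexOn hgrad hsc (M + 1)
    refine ⟨max R 0, le_max_right _ _, fun v hv => ?_⟩
    by_contra hc
    push_neg at hc
    have : M + 1 ≤ ‖gφ (gφs v)‖ := hR _ (le_trans (le_max_left _ _) hc.le)
    rw [hinv2 v] at this
    linarith
  rw [coercive_iff_unif, coercive_iff_unif]
  constructor
  · intro h M
    obtain ⟨R₁, hR₁⟩ := h M
    obtain ⟨R₂, hR₂0, hR₂⟩ := hbdd M
    refine ⟨max R₁ 0 + ρ * R₂, fun x hx v hv => ?_⟩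
    by_contra hc
    push_neg at hc
    have hg : ‖gφs v‖ ≤ R₂ := hR₂ v hc.le
    have hnorm : R₁ ≤ ‖x - ρ • gφs v‖ := by
      have h1 : ‖x‖ - ‖ρ • gφs v‖ ≤ ‖x - ρ • gφs v‖ := norm_sub_norm_le _ _
      have h2 : ‖ρ • gφs v‖ ≤ ρ * R₂ := by
        rw [norm_smul, Real.norm_eq_abs, abs_of_nonneg hρ]
        exact mul_le_mul_of_nonneg_left hg hρ
      have h3 := le_max_left R₁ (0:ℝ)
      linarith
    exact absurd (hR₁ _ hnorm v hv) (not_le.mpr hc)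
  · intro h M
    obtain ⟨R₁, hR₁⟩ := h M
    obtain ⟨R₂, hR₂0, hR₂⟩ := hbdd M
    refine ⟨max R₁ 0 + ρ * R₂, fun x hx v hv => ?_⟩
    by_contra hc
    push_neg at hc
    have hg : ‖gφs v‖ ≤ R₂ := hR₂ v hc.le
    set z := x + ρ • gφs v with hz
    have hnorm : R₁ ≤ ‖z‖ := by
      have h1 : ‖x‖ - ‖ρ • gφs v‖ ≤ ‖x + ρ • gφs v‖ := by
        calc ‖x‖ - ‖ρ • gφs v‖ ≤ ‖x‖ - ‖-(ρ • gφs v)‖ := by rw [norm_neg]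
          _ ≤ ‖x - (-(ρ • gφs v))‖ := norm_sub_norm_le _ _
          _ = ‖x + ρ • gφs v‖ := by rw [sub_neg_eq_add]
      have h2 : ‖ρ • gφs v‖ ≤ ρ * R₂ := by
        rw [norm_smul, Real.norm_eq_abs, abs_of_nonneg hρ]
        exact mul_le_mul_of_nonneg_left hg hρ
      have := le_max_left R₁ (0:ℝ)
      linarith
    have hmem : v ∈ {w : X | w ∈ T (z - ρ • gφs w)} := by
      simp only [Set.mem_setOf_eq, hz, add_sub_cancel_right]
      exact hv
    exact absurd (hR₁ z hnorm v hmem) (not_le.mpr hc)
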